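/- Substate lemma for pure states: Let ψ : Fin n → ℂ be a unit vector and σ a quantum state on ℂ^n with supp(|ψ⟩⟨ψ|) ⊆ supp(σ), and let k := D(|ψ⟩⟨ψ| ‖ σ). Then for every real r ≥ 1 there exists a unit vector φ : Fin n → ℂ such that ‖|ψ⟩⟨ψ| − |φ⟩⟨φ|‖₁ ≤ 2/√r and the matrix σ − ((r−1)/(r·2^{r·k}))·|φ⟩⟨φ| is positive semidefinite. -/

import Mathlib

open Matrix BigOperators
open scoped ComplexOrder

noncomputable section

/-- A quantum state: positive semidefinite matrix with unit trace. -/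
def IsState {d : Type*} [Fintype d] (ρ : Matrix d d ℂ) : Prop :=
  ρ.PosSemidef ∧ ρ.trace = 1

/-- `SuppLE ρ σ` : the support of `ρ` is contained in the support of `σ`,
expressed as inclusion of kernels the other way. -/
def SuppLE {d : Type*} [Fintype d] (ρ σ : Matrix d d ℂ) : Prop :=
  ∀ v : d → ℂ, σ *ᵥ v = 0 → ρ *ᵥ v = 0

/-- Matrix logarithm: apply `Real.log` to the eigenvalues (with `log 0 = 0`). -/
noncomputable def matLog {d : Type*} [Fintype d] [DecidableEq d]
    (ρ : Matrix d d ℂ) : Matrix d d ℂ :=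
  if h : ρ.IsHermitian then
    (h.eigenvectorUnitary : Matrix d d ℂ) *
      Matrix.diagonal (fun i => (Real.log (h.eigenvalues i) : ℂ)) *
      (star (h.eigenvectorUnitary : Matrix d d ℂ))
  else 0

/-- Quantum relative entropy `S(ρ‖σ) = Re Tr (ρ (log ρ - log σ))`. -/
noncomputable def relEnt {d : Type*} [Fintype d] [DecidableEq d]
    (ρ σ : Matrix d d ℂ) : ℝ :=
  (Matrix.trace (ρ * (matLog ρ - matLog σ))).re

/-- Trace norm of a Hermitian matrix: sum of absolute values of eigenvalues. -/
noncomputable def traceNorm {d : Type*} [Fintype d] [DecidableEq d]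
    (A : Matrix d d ℂ) : ℝ :=
  if h : A.IsHermitian then ∑ i, |h.eigenvalues i| else 0

/-- Rank-one operator `|ψ⟩⟨ψ|`. -/
def ketbra {d : Type*} (ψ : d → ℂ) : Matrix d d ℂ :=
  Matrix.of fun a b => ψ a * (starRingEnd ℂ) (ψ b)

/-- A POVM element: a positive semidefinite matrix `F` with `1 - F` positive semidefinite. -/
def IsPOVMElem {d : Type*} [Fintype d] [DecidableEq d] (F : Matrix d d ℂ) : Prop :=
  F.PosSemidef ∧ ((1 : Matrix d d ℂ) - F).PosSemidef

/-- `trR F ρ = Re Tr (F ρ)`. -/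
noncomputable def trR {d : Type*} [Fintype d] (F ρ : Matrix d d ℂ) : ℝ :=
  (Matrix.trace (F * ρ)).re

/-- Observational divergence `D(ρ‖σ)`. -/
noncomputable def obsDiv {d : Type*} [Fintype d] [DecidableEq d]
    (ρ σ : Matrix d d ℂ) : ℝ :=
  sSup {x : ℝ | ∃ F : Matrix d d ℂ, IsPOVMElem F ∧ trR F σ ≠ 0 ∧
    x = trR F ρ * Real.logb 2 (trR F ρ / trR F σ)}

/-- A probability distribution on `Fin n`. -/
def IsProbDist {n : ℕ} (P : Fin n → ℝ) : Prop :=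
  (∀ i, 0 ≤ P i) ∧ ∑ i, P i = 1

/-- Classical relative entropy (base 2); terms with `P i = 0` contribute `0`. -/
noncomputable def cRelEnt {n : ℕ} (P Q : Fin n → ℝ) : ℝ :=
  ∑ i, P i * Real.logb 2 (P i / Q i)

/-- Classical observational divergence. -/
noncomputable def cObsDiv {n : ℕ} (P Q : Fin n → ℝ) : ℝ :=
  sSup {x : ℝ | ∃ f : Fin n → ℝ, (∀ i, 0 ≤ f i ∧ f i ≤ 1) ∧
    (∑ i, f i * Q i) ≠ 0 ∧
    x = (∑ i, f i * P i) * Real.logb 2 ((∑ i, f i * P i) / (∑ i, f i * Q i))}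


section Helpers

set_option linter.unusedSectionVars false

variable {m : Type*} [Fintype m] [DecidableEq m]

lemma ip_self_eq (x : m → ℂ) :
    star x ⬝ᵥ x = ((∑ i, Complex.normSq (x i) : ℝ) : ℂ) := by
  push_cast
  simp only [dotProduct, Pi.star_apply, Complex.star_def]
  congr 1; ext i
  exact (Complex.normSq_eq_conj_mul_self).symm

lemma ip_swap (x y : m → ℂ) :
    star y ⬝ᵥ x = (starRingEnd ℂ) (star x ⬝ᵥ y) := by
  simp only [dotProduct, Pi.star_apply, map_sum, _root_.map_mul, Complex.star_def]
  congr 1; ext i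
  rw [Complex.conj_conj]; ring

lemma sum_abs_mul_abs_le (x y : m → ℂ) :
    ∑ i, ‖x i‖ * ‖y i‖ ≤
      Real.sqrt (∑ i, Complex.normSq (x i)) * Real.sqrt (∑ i, Complex.normSq (y i)) := by
  have h0 : (0:ℝ) ≤ ∑ i, ‖x i‖ * ‖y i‖ :=
    Finset.sum_nonneg fun i _ => mul_nonneg (norm_nonneg _) (norm_nonneg _)
  have hcs := Finset.sum_mul_sq_le_sq_mul_sq Finset.univ
    (fun i => ‖x i‖) (fun i => ‖y i‖)
  have h1 : ∑ i, ‖x i‖ ^ 2 = ∑ i, Complex.normSq (x i) := by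
    congr 1; ext i; rw [Complex.sq_norm]
  have h2 : ∑ i, ‖y i‖ ^ 2 = ∑ i, Complex.normSq (y i) := by
    congr 1; ext i; rw [Complex.sq_norm]
  rw [h1, h2] at hcs
  calc ∑ i, ‖x i‖ * ‖y i‖
      = Real.sqrt ((∑ i, ‖x i‖ * ‖y i‖)^2) := by
        rw [Real.sqrt_sq h0]
    _ ≤ Real.sqrt ((∑ i, Complex.normSq (x i)) * ∑ i, Complex.normSq (y i)) :=
        Real.sqrt_le_sqrt hcs
    _ = _ := Real.sqrt_mul (Finset.sum_nonneg fun i _ => Complex.normSq_nonneg _) _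

lemma abs_ip_le (x y : m → ℂ) :
    ‖star x ⬝ᵥ y‖ ≤
      Real.sqrt (∑ i, Complex.normSq (x i)) * Real.sqrt (∑ i, Complex.normSq (y i)) := by
  refine le_trans ?_ (sum_abs_mul_abs_le x y)
  refine le_trans (norm_sum_le _ _) ?_
  apply le_of_eq
  congr 1; ext i
  simp [Pi.star_apply, Complex.star_def, _root_.map_mul]

lemma normSq_ip_le (x y : m → ℂ) :
    Complex.normSq (star x ⬝ᵥ y) ≤ (∑ i, Complex.normSq (x i)) * (∑ i, Complex.normSq (y i)) := by
  have := abs_ip_le x y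
  have h0 := norm_nonneg (star x ⬝ᵥ y)
  have hx : (0:ℝ) ≤ ∑ i, Complex.normSq (x i) := Finset.sum_nonneg fun i _ => Complex.normSq_nonneg _
  have hy : (0:ℝ) ≤ ∑ i, Complex.normSq (y i) := Finset.sum_nonneg fun i _ => Complex.normSq_nonneg _
  calc Complex.normSq (star x ⬝ᵥ y) = ‖star x ⬝ᵥ y‖^2 := (Complex.sq_norm _).symm
    _ ≤ (Real.sqrt (∑ i, Complex.normSq (x i)) * Real.sqrt (∑ i, Complex.normSq (y i)))^2 := by
        exact pow_le_pow_left₀ h0 this 2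
    _ = _ := by rw [mul_pow, Real.sq_sqrt hx, Real.sq_sqrt hy]

lemma ketbra_mulVec (u v : m → ℂ) : ketbra u *ᵥ v = (star u ⬝ᵥ v) • u := by
  ext a
  simp only [ketbra, mulVec, dotProduct, Pi.smul_apply, smul_eq_mul, of_apply, Pi.star_apply]
  rw [Finset.sum_mul]
  congr 1; ext b
  simp [Complex.star_def]; ring

lemma ketbra_isHermitian (u : m → ℂ) : (ketbra u).IsHermitian := by
  ext a b
  simp [ketbra, Matrix.conjTranspose_apply, mul_comm]

lemma ketbra_form (u v : m → ℂ) :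
    star v ⬝ᵥ (ketbra u *ᵥ v) = ((Complex.normSq (star u ⬝ᵥ v) : ℝ) : ℂ) := by
  rw [ketbra_mulVec, dotProduct_smul, smul_eq_mul, ip_swap u v]
  exact Complex.mul_conj _

lemma ketbra_posSemidef (u : m → ℂ) : (ketbra u).PosSemidef := by
  refine Matrix.PosSemidef.of_dotProduct_mulVec_nonneg (ketbra_isHermitian u) fun v => ?_
  rw [ketbra_form]
  exact_mod_cast Complex.normSq_nonneg _

lemma trace_ketbra_mul (u : m → ℂ) (X : Matrix m m ℂ) :
    Matrix.trace (ketbra u * X) = star u ⬝ᵥ (X *ᵥ u) := by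
  simp only [Matrix.trace, Matrix.diag, Matrix.mul_apply, ketbra, of_apply,
    dotProduct, mulVec, Pi.star_apply]
  rw [Finset.sum_comm]
  congr 1; ext b
  rw [Finset.mul_sum]
  congr 1; ext a
  simp [Complex.star_def]; ring

lemma trace_mul_ketbra (X : Matrix m m ℂ) (u : m → ℂ) :
    Matrix.trace (X * ketbra u) = star u ⬝ᵥ (X *ᵥ u) := by
  rw [Matrix.trace_mul_comm, trace_ketbra_mul]

lemma eq_re_of_nonneg {z : ℂ} (h : 0 ≤ z) : z = ((z.re : ℝ) : ℂ) := by
  obtain ⟨h1, h2⟩ := Complex.nonneg_iff.mp h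
  exact Complex.ext (by simp) (by simp [← h2])

lemma starU_ip (U : Matrix m m ℂ) (hU : U * star U = 1) (x y : m → ℂ) :
    star (star U *ᵥ x) ⬝ᵥ (star U *ᵥ y) = star x ⬝ᵥ y := by
  have h1 : star (star U *ᵥ x) = star x ᵥ* U := by
    rw [Matrix.star_mulVec, Matrix.star_eq_conjTranspose, Matrix.conjTranspose_conjTranspose]
  rw [h1, ← Matrix.dotProduct_mulVec, Matrix.mulVec_mulVec]
  rw [hU, Matrix.one_mulVec]

lemma starU_normSq (U : Matrix m m ℂ) (hU : U * star U = 1) (x : m → ℂ) :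
    ∑ i, Complex.normSq ((star U *ᵥ x) i) = ∑ i, Complex.normSq (x i) := by
  have := starU_ip U hU x x
  rw [ip_self_eq, ip_self_eq] at this
  exact_mod_cast this

lemma conj_ketbra (B : Matrix m m ℂ) (x : m → ℂ) :
    star B * ketbra x * B = ketbra (star B *ᵥ x) := by
  ext a b
  simp only [Matrix.mul_apply, ketbra, of_apply, mulVec, dotProduct,
    Matrix.star_apply, Complex.star_def, Finset.sum_mul, Finset.mul_sum]
  rw [Finset.sum_comm]
  congr 1; ext c
  simp only [map_sum, _root_.map_mul, Complex.conj_conj]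
  rw [Finset.mul_sum]
  congr 1; ext d
  ring

open scoped MatrixOrder in
lemma psd_sqrt_exists {M : Matrix m m ℂ} (hM : M.PosSemidef) :
    ∃ S : Matrix m m ℂ, S.PosSemidef ∧ S * S = M :=
  ⟨CFC.sqrt M, (CFC.sqrt_nonneg M).posSemidef, CFC.sqrt_mul_sqrt_self M hM.nonneg⟩

def Matrix.PosSemidef.sqrt {M : Matrix m m ℂ} (hM : M.PosSemidef) : Matrix m m ℂ :=
  Classical.choose (psd_sqrt_exists hM)

lemma Matrix.PosSemidef.posSemidef_sqrt {M : Matrix m m ℂ} (hM : M.PosSemidef) :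
    hM.sqrt.PosSemidef :=
  (Classical.choose_spec (psd_sqrt_exists hM)).1

lemma Matrix.PosSemidef.sqrt_mul_self {M : Matrix m m ℂ} (hM : M.PosSemidef) :
    hM.sqrt * hM.sqrt = M :=
  (Classical.choose_spec (psd_sqrt_exists hM)).2

lemma psd_diag_re_nonneg {M : Matrix m m ℂ} (hM : M.PosSemidef) (i : m) :
    0 ≤ (M i i).re := by
  have h := hM.dotProduct_mulVec_nonneg (Pi.single i 1)
  have he : star (Pi.single i 1 : m → ℂ) ⬝ᵥ (M *ᵥ Pi.single i 1) = M i i := by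
    simp [dotProduct, mulVec, Pi.single_apply, Finset.sum_ite_eq', Finset.mul_sum]
  rw [he] at h
  exact (Complex.nonneg_iff.mp h).1

lemma trace_mul_psd_nonneg {A B : Matrix m m ℂ} (hA : A.PosSemidef) (hB : B.PosSemidef) :
    0 ≤ (Matrix.trace (A * B)).re := by
  have hS := hB.posSemidef_sqrt
  have hSH : hB.sqrt.conjTranspose = hB.sqrt := hS.1
  have h1 : A * B = A * hB.sqrt * hB.sqrt := by
    rw [Matrix.mul_assoc, hB.sqrt_mul_self]
  have h2 : Matrix.trace (A * B) = Matrix.trace (hB.sqrt * A * hB.sqrt) := by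
    rw [h1, Matrix.trace_mul_comm, ← Matrix.mul_assoc]
  have h3 : (hB.sqrt * A * hB.sqrt).PosSemidef := by
    have := hA.conjTranspose_mul_mul_same hB.sqrt
    rwa [hSH] at this
  rw [h2, Matrix.trace]
  have : ∀ i, 0 ≤ ((hB.sqrt * A * hB.sqrt).diag i).re := fun i => psd_diag_re_nonneg h3 i
  calc (0:ℝ) ≤ ∑ i, ((hB.sqrt * A * hB.sqrt).diag i).re := Finset.sum_nonneg fun i _ => this i
    _ = _ := by rw [← Complex.re_sum]

lemma one_sub_ketbra_posSemidef (u : m → ℂ) (hu : ∑ i, Complex.normSq (u i) = 1) :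
    ((1 : Matrix m m ℂ) - ketbra u).PosSemidef := by
  refine Matrix.PosSemidef.of_dotProduct_mulVec_nonneg (Matrix.IsHermitian.sub Matrix.isHermitian_one (ketbra_isHermitian u)) fun v => ?_
  rw [Matrix.sub_mulVec, dotProduct_sub, Matrix.one_mulVec, ip_self_eq, ketbra_form]
  rw [show ((∑ i, Complex.normSq (v i) : ℝ) : ℂ) - ((Complex.normSq (star u ⬝ᵥ v) : ℝ) : ℂ)
      = (((∑ i, Complex.normSq (v i)) - Complex.normSq (star u ⬝ᵥ v) : ℝ) : ℂ) from by push_cast; ring]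
  rw [Complex.zero_le_real]
  have := normSq_ip_le u v
  rw [hu, one_mul] at this
  linarith

lemma normSq_sub_normSq_eq (z w : ℂ) :
    Complex.normSq z - Complex.normSq w = ((z + w) * (starRingEnd ℂ) (z - w)).re := by
  simp only [Complex.mul_re, Complex.add_re, Complex.add_im, Complex.sub_re, Complex.sub_im,
    Complex.conj_re, Complex.conj_im, Complex.normSq_apply]
  ring

/-- Trace norm bound for the difference of two pure states. -/
lemma traceNorm_ketbra_sub_le (ψ φ : m → ℂ)
    (hψ : ∑ i, Complex.normSq (ψ i) = 1) (hφ : ∑ i, Complex.normSq (φ i) = 1)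
    (g : ℝ) (hg : star ψ ⬝ᵥ φ = (g : ℂ)) :
    traceNorm (ketbra ψ - ketbra φ) ≤ 2 * Real.sqrt (1 - g ^ 2) := by
  have hA : (ketbra ψ - ketbra φ).IsHermitian :=
    Matrix.IsHermitian.sub (ketbra_isHermitian ψ) (ketbra_isHermitian φ)
  rw [traceNorm, dif_pos hA]
  set U : Matrix m m ℂ := (hA.eigenvectorUnitary : Matrix m m ℂ) with hUdef
  have hUU : U * star U = 1 := (Matrix.mem_unitaryGroup_iff).mp hA.eigenvectorUnitary.2
  set cψ : m → ℂ := star U *ᵥ ψ with hcψ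
  set cφ : m → ℂ := star U *ᵥ φ with hcφ
  have hdiag : star U * (ketbra ψ - ketbra φ) * U = Matrix.diagonal (RCLike.ofReal ∘ hA.eigenvalues) := by
    have := hA.conjStarAlgAut_star_eigenvectorUnitary
    rw [Unitary.conjStarAlgAut_star_apply] at this; exact this
  have hket : star U * (ketbra ψ - ketbra φ) * U = ketbra cψ - ketbra cφ := by
    rw [Matrix.mul_sub, Matrix.sub_mul, conj_ketbra, conj_ketbra]
  have hμ : ∀ i, hA.eigenvalues i = Complex.normSq (cψ i) - Complex.normSq (cφ i) := by
    intro i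
    have h2 : (star U * (ketbra ψ - ketbra φ) * U) i i
        = Matrix.diagonal (RCLike.ofReal ∘ hA.eigenvalues) i i := by rw [hdiag]
    rw [hket] at h2
    have h3 : (ketbra cψ - ketbra cφ) i i
        = ((Complex.normSq (cψ i) - Complex.normSq (cφ i) : ℝ) : ℂ) := by
      simp only [Matrix.sub_apply, ketbra, of_apply]
      rw [Complex.mul_conj, Complex.mul_conj]
      push_cast; ring
    rw [h3, Matrix.diagonal_apply_eq] at h2
    have := congrArg Complex.re h2
    simpa using this.symm
  have key : ∀ i, |hA.eigenvalues i| ≤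
      ‖(cψ + cφ) i‖ * ‖(cψ - cφ) i‖ := by
    intro i
    rw [hμ i, normSq_sub_normSq_eq]
    refine le_trans (Complex.abs_re_le_norm _) ?_
    rw [norm_mul, Complex.norm_conj]
    simp [Pi.add_apply, Pi.sub_apply]
  have hsum : ∑ i, |hA.eigenvalues i| ≤
      Real.sqrt (∑ i, Complex.normSq ((cψ + cφ) i)) * Real.sqrt (∑ i, Complex.normSq ((cψ - cφ) i)) :=
    le_trans (Finset.sum_le_sum fun i _ => key i) (sum_abs_mul_abs_le _ _)
  have hplus : cψ + cφ = star U *ᵥ (ψ + φ) := by rw [Matrix.mulVec_add]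
  have hminus : cψ - cφ = star U *ᵥ (ψ - φ) := by rw [Matrix.mulVec_sub]
  rw [hplus, hminus, starU_normSq U hUU, starU_normSq U hUU] at hsum
  have hφψ : star φ ⬝ᵥ ψ = (g : ℂ) := by
    rw [ip_swap, hg]; simp [Complex.star_def, Complex.conj_ofReal]
  have hnp : ∑ i, Complex.normSq ((ψ + φ) i) = 2 + 2 * g := by
    have : star (ψ + φ) ⬝ᵥ (ψ + φ) = ((2 + 2*g : ℝ) : ℂ) := by
      rw [star_add, add_dotProduct, dotProduct_add, dotProduct_add,
        ip_self_eq ψ, ip_self_eq φ, hψ, hφ, hg, hφψ]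
      push_cast; ring
    have h2 := ip_self_eq (ψ + φ)
    rw [this] at h2
    exact_mod_cast h2.symm
  have hnm : ∑ i, Complex.normSq ((ψ - φ) i) = 2 - 2 * g := by
    have : star (ψ - φ) ⬝ᵥ (ψ - φ) = ((2 - 2*g : ℝ) : ℂ) := by
      rw [star_sub, sub_dotProduct, dotProduct_sub, dotProduct_sub,
        ip_self_eq ψ, ip_self_eq φ, hψ, hφ, hg, hφψ]
      push_cast; ring
    have h2 := ip_self_eq (ψ - φ)
    rw [this] at h2
    exact_mod_cast h2.symm
  rw [hnp, hnm] at hsum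
  refine hsum.trans (le_of_eq ?_)
  rw [← Real.sqrt_mul (by rw [← hnp]; exact Finset.sum_nonneg fun i _ => Complex.normSq_nonneg _)]
  rw [show (2 + 2*g) * (2 - 2*g) = 4 * (1 - g^2) by ring]
  rw [Real.sqrt_mul (by norm_num : (0:ℝ) ≤ 4)]
  rw [show Real.sqrt 4 = 2 by
    rw [show (4:ℝ) = 2^2 by norm_num, Real.sqrt_sq (by norm_num : (0:ℝ) ≤ 2)]]

lemma sum_sqrt_mul_sqrt_le' (f g : m → ℝ) (hf : ∀ i, 0 ≤ f i) (hg : ∀ i, 0 ≤ g i) :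
    ∑ i, Real.sqrt (f i) * Real.sqrt (g i) ≤ Real.sqrt (∑ i, f i) * Real.sqrt (∑ i, g i) := by
  have h0 : (0:ℝ) ≤ ∑ i, Real.sqrt (f i) * Real.sqrt (g i) :=
    Finset.sum_nonneg fun i _ => mul_nonneg (Real.sqrt_nonneg _) (Real.sqrt_nonneg _)
  have hcs := Finset.sum_mul_sq_le_sq_mul_sq Finset.univ
    (fun i => Real.sqrt (f i)) (fun i => Real.sqrt (g i))
  simp only [Real.sq_sqrt (hf _), Real.sq_sqrt (hg _)] at hcs
  calc ∑ i, Real.sqrt (f i) * Real.sqrt (g i)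
      = Real.sqrt ((∑ i, Real.sqrt (f i) * Real.sqrt (g i))^2) := by rw [Real.sqrt_sq h0]
    _ ≤ Real.sqrt ((∑ i, f i) * ∑ i, g i) := Real.sqrt_le_sqrt hcs
    _ = _ := Real.sqrt_mul (Finset.sum_nonneg fun i _ => hf i) _

lemma dominate_of_suppLE (ψ : m → ℂ) (hψ0 : ψ ≠ 0) (σ : Matrix m m ℂ) (hσ : σ.PosSemidef)
    (hsupp : ∀ v : m → ℂ, σ *ᵥ v = 0 → ketbra ψ *ᵥ v = 0) :
    ∃ C : ℝ, 0 ≤ C ∧ ∀ w : m → ℂ,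
      Complex.normSq (star ψ ⬝ᵥ w) ≤ C * (star w ⬝ᵥ (σ *ᵥ w)).re := by
  have hH := hσ.1
  set V : Matrix m m ℂ := (hH.eigenvectorUnitary : Matrix m m ℂ) with hV
  have hVU : V * star V = 1 := (Matrix.mem_unitaryGroup_iff).mp hH.eigenvectorUnitary.2
  set q := hH.eigenvalues with hqdef
  have hq0 : ∀ i, 0 ≤ q i := hσ.eigenvalues_nonneg
  set c : m → ℂ := star V *ᵥ ψ with hc
  have hsuppc : ∀ i, q i = 0 → c i = 0 := by
    intro i hqi
    set v : m → ℂ := ⇑(hH.eigenvectorBasis i) with hv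
    have hσv : σ *ᵥ v = 0 := by
      rw [hv, hH.mulVec_eigenvectorBasis i, ← hqdef, hqi, zero_smul]
    have h3 := hsupp v hσv
    rw [ketbra_mulVec] at h3
    have h4 : star ψ ⬝ᵥ v = 0 := by
      rcases smul_eq_zero.mp h3 with h | h
      · exact h
      · exact absurd h hψ0
    have h5 : c i = star v ⬝ᵥ ψ := by
      have hvb : ∀ b, v b = V b i := by
        intro b; rw [hv, hV]; exact (hH.eigenvectorUnitary_apply b i).symm
      simp only [hc, mulVec, dotProduct, Matrix.star_apply, Pi.star_apply, hvb]
    rw [h5, ip_swap, h4, map_zero]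
  refine ⟨∑ i, Complex.normSq (c i) / q i,
    Finset.sum_nonneg (fun i _ => div_nonneg (Complex.normSq_nonneg _) (hq0 i)), ?_⟩
  intro w
  set d : m → ℂ := star V *ᵥ w with hd
  have hA1 : star ψ ⬝ᵥ w = star c ⬝ᵥ d := (starU_ip V hVU ψ w).symm
  have hA2 : (star w ⬝ᵥ (σ *ᵥ w)) = ((∑ i, q i * Complex.normSq (d i) : ℝ) : ℂ) := by
    have hspec := hH.spectral_theorem
    have hstar : star d = star w ᵥ* V := by
      rw [hd, Matrix.star_mulVec, Matrix.star_eq_conjTranspose, Matrix.conjTranspose_conjTranspose]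
    have hspec' : σ = V * Matrix.diagonal (RCLike.ofReal ∘ q) * star V := by
      rw [Unitary.conjStarAlgAut_apply] at hspec; exact hspec
    calc star w ⬝ᵥ (σ *ᵥ w)
        = star w ⬝ᵥ ((V * Matrix.diagonal (RCLike.ofReal ∘ q) * star V) *ᵥ w) := by
          rw [← hspec']
      _ = star w ⬝ᵥ (V *ᵥ (Matrix.diagonal (RCLike.ofReal ∘ q) *ᵥ d)) := by
          rw [hd, Matrix.mulVec_mulVec, Matrix.mulVec_mulVec]
      _ = (star w ᵥ* V) ⬝ᵥ (Matrix.diagonal (RCLike.ofReal ∘ q) *ᵥ d) := by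
          rw [Matrix.dotProduct_mulVec, Matrix.dotProduct_mulVec]
      _ = star d ⬝ᵥ (Matrix.diagonal (RCLike.ofReal ∘ q) *ᵥ d) := by rw [hstar]
      _ = ∑ i, (starRingEnd ℂ) (d i) * ((q i : ℂ) * d i) := by
          simp [dotProduct, Matrix.mulVec_diagonal, Pi.star_apply, Complex.star_def,
            Function.comp]
      _ = ((∑ i, q i * Complex.normSq (d i) : ℝ) : ℂ) := by
          push_cast
          congr 1; ext i
          rw [show (starRingEnd ℂ) (d i) * ((q i : ℂ) * d i)
              = (q i : ℂ) * ((starRingEnd ℂ) (d i) * d i) from by ring,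
            ← Complex.normSq_eq_conj_mul_self]
  have habs : ‖star c ⬝ᵥ d‖ ≤
      Real.sqrt (∑ i, Complex.normSq (c i) / q i) * Real.sqrt (∑ i, q i * Complex.normSq (d i)) := by
    refine le_trans (le_trans (norm_sum_le _ _) ?_)
      (sum_sqrt_mul_sqrt_le' _ _ (fun i => div_nonneg (Complex.normSq_nonneg _) (hq0 i))
        (fun i => mul_nonneg (hq0 i) (Complex.normSq_nonneg _)))
    apply Finset.sum_le_sum
    intro i _
    rcases eq_or_lt_of_le (hq0 i) with hq | hq
    · have hc0 : c i = 0 := hsuppc i hq.symm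
      rw [Pi.star_apply, hc0, star_zero, zero_mul, norm_zero]
      positivity
    · apply le_of_eq
      rw [← Real.sqrt_mul (div_nonneg (Complex.normSq_nonneg _) (hq0 i))]
      rw [show Complex.normSq (c i) / q i * (q i * Complex.normSq (d i))
          = Complex.normSq (c i) * Complex.normSq (d i) from by field_simp [hq.ne']]
      rw [Real.sqrt_mul (Complex.normSq_nonneg _), Pi.star_apply]
      rw [norm_mul, norm_star, Complex.norm_def, Complex.norm_def]
  have hfin : Complex.normSq (star ψ ⬝ᵥ w) ≤
      (∑ i, Complex.normSq (c i) / q i) * (∑ i, q i * Complex.normSq (d i)) := by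
    rw [hA1]
    have h0 := norm_nonneg (star c ⬝ᵥ d)
    have hCnn : (0:ℝ) ≤ ∑ i, Complex.normSq (c i) / q i :=
      Finset.sum_nonneg (fun i _ => div_nonneg (Complex.normSq_nonneg _) (hq0 i))
    have hQnn : (0:ℝ) ≤ ∑ i, q i * Complex.normSq (d i) :=
      Finset.sum_nonneg (fun i _ => mul_nonneg (hq0 i) (Complex.normSq_nonneg _))
    calc Complex.normSq (star c ⬝ᵥ d) = ‖star c ⬝ᵥ d‖^2 := (Complex.sq_norm _).symm
      _ ≤ (Real.sqrt (∑ i, Complex.normSq (c i) / q i) * Real.sqrt (∑ i, q i * Complex.normSq (d i)))^2 :=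
          pow_le_pow_left₀ h0 habs 2
      _ = _ := by rw [mul_pow, Real.sq_sqrt hCnn, Real.sq_sqrt hQnn]
  rw [hA2]
  simpa using hfin


set_option maxHeartbeats 1000000 in
lemma keyIneq (r k E a T : ℝ) (hr : 1 < r) (hk : 0 ≤ k)
    (hT : T = (2:ℝ) ^ (r * k)) (hE : 1/r < E) (hEa : E ≤ a) (ha : a < 1) :
    k < (E/a) * Real.logb 2 (E * ((r-1)*T) / (1-a)) := by
  have hr0 : (0:ℝ) < r := lt_trans one_pos hr
  have hr1 : (0:ℝ) < r - 1 := by linarith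
  have hT0 : (0:ℝ) < T := by rw [hT]; exact Real.rpow_pos_of_pos (by norm_num) _
  have hE0 : (0:ℝ) < E := lt_trans (by positivity) hE
  have ha0 : (0:ℝ) < a := lt_of_lt_of_le hE0 hEa
  have h1a : (0:ℝ) < 1 - a := by linarith
  have h1E : (0:ℝ) < 1 - E := by linarith
  have hlog2 : (0:ℝ) < Real.log 2 := Real.log_pos (by norm_num)
  set K := k * Real.log 2 with hK
  have hK0 : 0 ≤ K := mul_nonneg hk hlog2.le
  have hlogT : Real.log T = r * K := by
    rw [hT, Real.log_rpow (by norm_num)]; rw [hK]; ring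
  set X := E * ((r-1)*T) / (1-a) with hX
  have hX0 : (0:ℝ) < X := by positivity
  have hEr : 1 < E * r := by rw [div_lt_iff₀ hr0] at hE; linarith
  have hXdecomp : Real.log X = Real.log E + Real.log (r-1) + r * K - Real.log (1-a) := by
    rw [hX, Real.log_div (by positivity) h1a.ne', Real.log_mul hE0.ne' (by positivity),
      Real.log_mul hr1.ne' hT0.ne', hlogT]
    ring
  have hmain : K * a < E * Real.log X := by
    rw [hXdecomp,
      show E * (Real.log E + Real.log (r-1) + r * K - Real.log (1-a))
        = E * Real.log E + E * Real.log (r-1) + E * (r*K) - E * Real.log (1-a) from by ring]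
    have f3 : E*K ≤ E*(r*K) := by
      have h6 : 0 ≤ (E*K)*(r-1) := mul_nonneg (mul_nonneg hE0.le hK0) hr1.le
      have h7 : (E*K)*(r-1) = E*(r*K) - E*K := by ring
      linarith [h7 ▸ h6]
    rcases le_or_gt (K * (1-E)) E with hcase | hcase
    · -- Case A
      have h1 : 1 < E * (r-1) / (1-E) := by
        rw [lt_div_iff₀ h1E]; nlinarith
      have hP : 0 < Real.log (E * (r-1) / (1-E)) := Real.log_pos h1
      have hPd : Real.log (E * (r-1) / (1-E))
          = Real.log E + Real.log (r-1) - Real.log (1-E) := by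
        rw [Real.log_div (by positivity) h1E.ne', Real.log_mul hE0.ne' hr1.ne']
      have f2 : 0 < E * Real.log E + E * Real.log (r-1) - E * Real.log (1-E) := by
        have h2 := mul_pos hE0 (hPd ▸ hP)
        have h3 : E * (Real.log E + Real.log (r-1) - Real.log (1-E))
            = E * Real.log E + E * Real.log (r-1) - E * Real.log (1-E) := by ring
        linarith [h3 ▸ h2]
      have htan : Real.log (1-a) - Real.log (1-E) ≤ (E - a) / (1-E) := by
        have h4 := Real.log_le_sub_one_of_pos (show 0 < (1-a)/(1-E) by positivity)
        rw [Real.log_div h1a.ne' h1E.ne'] at h4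
        have heq : (1-a)/(1-E) - 1 = (E - a)/(1-E) := by field_simp <;> ring
        linarith [heq ▸ h4]
      have htanE : E * Real.log (1-a) - E * Real.log (1-E) ≤ (E/(1-E)) * (E - a) := by
        have h5 := mul_le_mul_of_nonneg_left htan hE0.le
        have h6 : E * ((E-a)/(1-E)) = (E/(1-E)) * (E - a) := by ring
        have h7 : E * (Real.log (1-a) - Real.log (1-E))
            = E * Real.log (1-a) - E * Real.log (1-E) := by ring
        linarith [h6 ▸ h7 ▸ h5]
      have hKR : K ≤ E / (1-E) := (le_div_iff₀ h1E).mpr hcase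
      have e2' : (E/(1-E)) * (E - a) ≤ K * (E - a) := by
        have := mul_le_mul_of_nonpos_right hKR (show E - a ≤ 0 by linarith)
        linarith
      have f1 : E * Real.log (1-a) - E * Real.log (1-E) ≤ K*E - K*a := by
        have h8 : K * (E - a) = K*E - K*a := by ring
        linarith [h8 ▸ (htanE.trans e2')]
      linarith
    · -- Case B
      have hKpos : 0 < K := by nlinarith [lt_trans hE0 hcase, h1E]
      have t1 : Real.log (1-a) + Real.log K - Real.log E ≤ (1-a)*K/E - 1 := by
        have h4 := Real.log_le_sub_one_of_pos (show 0 < (1-a)*K/E by positivity)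
        rw [Real.log_div (by positivity) hE0.ne', Real.log_mul h1a.ne' hKpos.ne'] at h4
        linarith
      have t2 : E * Real.log (1-a) + E * Real.log K - E * Real.log E ≤ K - a*K - E := by
        have h5 := mul_le_mul_of_nonneg_left t1 hE0.le
        have h6 : E * ((1-a)*K/E - 1) = K - a*K - E := by field_simp <;> ring
        have h7 : E * (Real.log (1-a) + Real.log K - Real.log E)
            = E * Real.log (1-a) + E * Real.log K - E * Real.log E := by ring
        linarith [h6 ▸ h7 ▸ h5]
      have hK1 : 1 < K*(r-1) := by
        have hstep : K*(1-E) < K*(E*(r-1)) := by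
          apply mul_lt_mul_of_pos_left _ hKpos
          nlinarith
        have hstep2 : E < K*(E*(r-1)) := lt_trans hcase hstep
        by_contra hcon
        push_neg at hcon
        have h9 : K*(E*(r-1)) = E*(K*(r-1)) := by ring
        have h10 : E*(K*(r-1)) ≤ E*1 := mul_le_mul_of_nonneg_left hcon hE0.le
        rw [h9] at hstep2; linarith
      have c2 : 0 ≤ E * Real.log (r-1) + E * Real.log K := by
        have h11 := Real.log_pos hK1
        rw [Real.log_mul hKpos.ne' hr1.ne'] at h11
        have h12 := mul_le_mul_of_nonneg_left (le_of_lt h11) hE0.le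
        have h13 : E * (Real.log K + Real.log (r-1))
            = E * Real.log (r-1) + E * Real.log K := by ring
        simp only [mul_zero] at h12
        linarith [h13 ▸ h12]
      have c3 : K < E*(r*K) := by
        have h14 := mul_pos (show (0:ℝ) < E*r - 1 by linarith) hKpos
        have h15 : (E*r - 1)*K = E*(r*K) - K := by ring
        linarith [h15 ▸ h14]
      linarith
  rw [Real.logb, div_mul_div_comm, lt_div_iff₀ (by positivity)]
  calc k * (a * Real.log 2) = K * a := by rw [hK]; ring
    _ < E * Real.log X := hmain


lemma coef_ineq (r E : ℝ) (hr1 : 1 < r) (hE0 : 0 < E) (hEr' : E * r ≤ 1) :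
    E * (r-1)^2 ≤ (1-E)^2 * r := by
  have hu' : 0 ≤ 1 - E*r := by linarith
  have hrr1 : (0:ℝ) ≤ r - 1 := by linarith
  have hr0 : (0:ℝ) < r := by linarith
  nlinarith [mul_nonneg hu' hrr1, mul_nonneg hu' (sq_nonneg (r-1)), mul_nonneg hu' hu', hr0]


end Helpers

set_option maxHeartbeats 1600000

/-- Substate lemma for pure states. -/
theorem pure_state_substate {n : ℕ} (ψ : Fin n → ℂ)
    (hψ : ∑ i, Complex.normSq (ψ i) = 1)
    (σ : Matrix (Fin n) (Fin n) ℂ) (hσ : IsState σ)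
    (hsupp : SuppLE (ketbra ψ) σ)
    (k : ℝ) (hk : k = obsDiv (ketbra ψ) σ)
    (r : ℝ) (hr : 1 ≤ r) :
    ∃ φ : Fin n → ℂ, (∑ i, Complex.normSq (φ i) = 1) ∧
      traceNorm (ketbra ψ - ketbra φ) ≤ 2 / Real.sqrt r ∧
      (σ - (((r - 1) / (r * (2 : ℝ) ^ (r * k)) : ℝ) : ℂ) • ketbra φ).PosSemidef := by
  obtain ⟨hσpsd, hσtr⟩ := hσ
  have hψip : star ψ ⬝ᵥ ψ = (1:ℂ) := by rw [ip_self_eq, hψ]; norm_num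
  have hψ0 : ψ ≠ 0 := by
    intro h; rw [h] at hψ; simp at hψ
  set T : ℝ := (2:ℝ) ^ (r * k) with hTdef
  have hT0 : (0:ℝ) < T := Real.rpow_pos_of_pos (by norm_num) _
  set S : Set ℝ := {x : ℝ | ∃ F : Matrix (Fin n) (Fin n) ℂ, IsPOVMElem F ∧ trR F σ ≠ 0 ∧
    x = trR F (ketbra ψ) * Real.logb 2 (trR F (ketbra ψ) / trR F σ)} with hSdef
  have hkS : k = sSup S := hk
  have htrσ1 : trR 1 σ = 1 := by
    unfold trR; rw [Matrix.one_mul, hσtr]; simp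
  have htrρ1 : trR 1 (ketbra ψ) = 1 := by
    unfold trR; rw [Matrix.one_mul]
    have h1 : Matrix.trace (ketbra ψ) = ((∑ i, Complex.normSq (ψ i) : ℝ) : ℂ) := by
      push_cast
      simp only [Matrix.trace, Matrix.diag, ketbra, of_apply]
      congr 1; ext i
      exact Complex.mul_conj (ψ i)
    rw [h1, hψ]; simp
  have h0S : (0:ℝ) ∈ S := by
    simp only [hSdef, Set.mem_setOf_eq]
    refine ⟨1, ⟨Matrix.PosSemidef.one, by rw [sub_self]; exact Matrix.PosSemidef.zero⟩, ?_, ?_⟩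
    · rw [htrσ1]; norm_num
    · rw [htrρ1, htrσ1]; norm_num
  obtain ⟨C, hC0, hCdom⟩ := dominate_of_suppLE ψ hψ0 σ hσpsd hsupp
  have hdomM : ((C:ℂ) • σ - ketbra ψ).PosSemidef := by
    refine Matrix.PosSemidef.of_dotProduct_mulVec_nonneg ?_ ?_
    · show ((C:ℂ) • σ - ketbra ψ)ᴴ = _
      rw [Matrix.conjTranspose_sub, Matrix.conjTranspose_smul, hσpsd.1.eq,
        (ketbra_isHermitian ψ).eq, Complex.star_def, Complex.conj_ofReal]
    · intro v
      rw [Matrix.sub_mulVec, dotProduct_sub, Matrix.smul_mulVec, dotProduct_smul,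
        ketbra_form, smul_eq_mul, eq_re_of_nonneg (hσpsd.dotProduct_mulVec_nonneg v)]
      rw [show (C:ℂ) * (((star v ⬝ᵥ σ *ᵥ v).re : ℝ) : ℂ) - ((Complex.normSq (star ψ ⬝ᵥ v) : ℝ) : ℂ)
          = ((C * (star v ⬝ᵥ σ *ᵥ v).re - Complex.normSq (star ψ ⬝ᵥ v) : ℝ) : ℂ) from by push_cast; ring]
      rw [Complex.zero_le_real]
      linarith [hCdom v]
  have hSbdd : BddAbove S := by
    refine ⟨max 0 (Real.logb 2 C), ?_⟩
    rintro x ⟨F, hF, hs0, rfl⟩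
    have ht0 : 0 ≤ trR F (ketbra ψ) := trace_mul_psd_nonneg hF.1 (ketbra_posSemidef ψ)
    have hs0' : 0 ≤ trR F σ := trace_mul_psd_nonneg hF.1 hσpsd
    have hspos : 0 < trR F σ := lt_of_le_of_ne hs0' (Ne.symm hs0)
    have ht1 : trR F (ketbra ψ) ≤ 1 := by
      have h2 := trace_mul_psd_nonneg hF.2 (ketbra_posSemidef ψ)
      have h3 : Matrix.trace (((1 : Matrix (Fin n) (Fin n) ℂ) - F) * ketbra ψ)
          = Matrix.trace (ketbra ψ) - Matrix.trace (F * ketbra ψ) := by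
        rw [Matrix.sub_mul, Matrix.one_mul, Matrix.trace_sub]
      rw [h3] at h2
      have h4 : (Matrix.trace (ketbra ψ)).re = 1 := by
        have h5 := htrρ1; unfold trR at h5; rw [Matrix.one_mul] at h5; exact h5
      rw [Complex.sub_re, h4] at h2
      unfold trR; linarith
    have hts : trR F (ketbra ψ) ≤ C * trR F σ := by
      have h2 := trace_mul_psd_nonneg hF.1 hdomM
      have h3 : Matrix.trace (F * ((C:ℂ) • σ - ketbra ψ))
          = (C:ℂ) * Matrix.trace (F * σ) - Matrix.trace (F * ketbra ψ) := by
        rw [Matrix.mul_sub, Matrix.trace_sub, Matrix.mul_smul, Matrix.trace_smul, smul_eq_mul]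
      rw [h3, Complex.sub_re, Complex.re_ofReal_mul] at h2
      unfold trR; linarith
    rcases le_or_gt (trR F (ketbra ψ)) (trR F σ) with hle | hlt
    · have hlog : Real.logb 2 (trR F (ketbra ψ) / trR F σ) ≤ 0 :=
        Real.logb_nonpos (by norm_num) (by positivity) ((div_le_one hspos).mpr hle)
      exact le_trans (mul_nonpos_of_nonneg_of_nonpos ht0 hlog) (le_max_left _ _)
    · have hratio1 : 1 < trR F (ketbra ψ) / trR F σ := (one_lt_div hspos).mpr hlt
      have hlogpos : 0 ≤ Real.logb 2 (trR F (ketbra ψ) / trR F σ) :=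
        le_of_lt (Real.logb_pos (by norm_num) hratio1)
      have htpos : 0 < trR F (ketbra ψ) := lt_of_le_of_lt hs0' hlt
      have hCpos : 0 < C := by
        rcases hC0.eq_or_lt with hC | hC
        · exfalso; rw [← hC, zero_mul] at hts; linarith
        · exact hC
      have hratioC : trR F (ketbra ψ) / trR F σ ≤ C := (div_le_iff₀ hspos).mpr (by linarith)
      refine le_trans ?_ (le_max_right _ _)
      calc trR F (ketbra ψ) * Real.logb 2 (trR F (ketbra ψ) / trR F σ)
          ≤ 1 * Real.logb 2 (trR F (ketbra ψ) / trR F σ) :=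
            mul_le_mul_of_nonneg_right ht1 hlogpos
        _ = Real.logb 2 (trR F (ketbra ψ) / trR F σ) := one_mul _
        _ ≤ Real.logb 2 C :=
            Real.logb_le_logb_of_le (by norm_num) (by positivity) hratioC
  have hmemk : ∀ x ∈ S, x ≤ k := fun x hx => by rw [hkS]; exact le_csSup hSbdd hx
  have hk0 : 0 ≤ k := by rw [hkS]; exact le_csSup hSbdd h0S
  rcases eq_or_lt_of_le hr with hr1 | hr1
  · -- case r = 1 : take φ = ψ
    refine ⟨ψ, hψ, ?_, ?_⟩
    · have h5 := traceNorm_ketbra_sub_le ψ ψ hψ hψ 1 (by rw [hψip]; norm_num)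
      calc traceNorm (ketbra ψ - ketbra ψ) ≤ 2 * Real.sqrt (1 - 1^2) := h5
        _ = 0 := by norm_num
        _ ≤ 2 / Real.sqrt r := by positivity
    · rw [show (((r - 1) / (r * T) : ℝ) : ℂ) = 0 from by rw [← hr1]; norm_num,
        zero_smul, sub_zero]
      exact hσpsd
  -- main case 1 < r
  have hr0 : (0:ℝ) < r := lt_trans one_pos hr1
  have hrr1 : (0:ℝ) < r - 1 := by linarith
  set lam : ℝ := ((r-1)*T)⁻¹ with hlamdef
  have hlam0 : 0 < lam := by positivity
  set c' : ℝ := (r-1)/(r*T) with hc'def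
  have hc'0 : 0 ≤ c' := by positivity
  set L : Matrix (Fin n) (Fin n) ℂ := ((lam:ℝ):ℂ) • (1 : Matrix (Fin n) (Fin n) ℂ) with hLdef
  set M : Matrix (Fin n) (Fin n) ℂ := σ + L with hMdef
  have hLmv : ∀ v : Fin n → ℂ, L *ᵥ v = ((lam:ℝ):ℂ) • v := by
    intro v; rw [hLdef, Matrix.smul_mulVec, Matrix.one_mulVec]
  have hMH : M.IsHermitian := by
    apply Matrix.IsHermitian.add hσpsd.1
    show Lᴴ = L
    rw [hLdef, Matrix.conjTranspose_smul, Matrix.conjTranspose_one, Complex.star_def,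
      Complex.conj_ofReal]
  have hsumpos : ∀ x : Fin n → ℂ, x ≠ 0 → 0 < ∑ i, Complex.normSq (x i) := by
    intro x hx
    obtain ⟨i, hi⟩ := Function.ne_iff.mp hx
    exact Finset.sum_pos' (fun j _ => Complex.normSq_nonneg _)
      ⟨i, Finset.mem_univ i, Complex.normSq_pos.mpr hi⟩
  have hMpd : M.PosDef := by
    refine Matrix.PosDef.of_dotProduct_mulVec_pos hMH fun x hx => ?_
    rw [hMdef, Matrix.add_mulVec, dotProduct_add, hLmv, dotProduct_smul, smul_eq_mul,
      ip_self_eq, eq_re_of_nonneg (hσpsd.dotProduct_mulVec_nonneg x)]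
    rw [show (((star x ⬝ᵥ σ *ᵥ x).re : ℝ) : ℂ) + ((lam:ℝ):ℂ) * ((∑ i, Complex.normSq (x i) : ℝ) : ℂ)
        = (((star x ⬝ᵥ σ *ᵥ x).re + lam * ∑ i, Complex.normSq (x i) : ℝ) : ℂ) from by push_cast; ring]
    rw [Complex.zero_lt_real]
    have h6 := (Complex.nonneg_iff.mp (hσpsd.dotProduct_mulVec_nonneg x)).1
    have h7 := hsumpos x hx
    have h7b := mul_pos hlam0 h7
    linarith
  have hMunit : IsUnit M.det := isUnit_iff_ne_zero.mpr (ne_of_gt hMpd.det_pos)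
  set N : Matrix (Fin n) (Fin n) ℂ := M⁻¹ with hNdef
  have hMN : M * N = 1 := Matrix.mul_nonsing_inv M hMunit
  have hNpd : N.PosDef := hMpd.inv
  set u₀ : Fin n → ℂ := N *ᵥ ψ with hu₀def
  have hMu₀ : M *ᵥ u₀ = ψ := by
    rw [hu₀def, Matrix.mulVec_mulVec, hMN, Matrix.one_mulVec]
  have hu₀0 : u₀ ≠ 0 := by
    intro h
    rw [h, Matrix.mulVec_zero] at hMu₀
    exact hψ0 hMu₀.symm
  have hGc0 : 0 < star ψ ⬝ᵥ u₀ := by rw [hu₀def]; exact hNpd.dotProduct_mulVec_pos hψ0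
  clear_value u₀
  set G : ℝ := (star ψ ⬝ᵥ u₀).re with hGdef
  have hGc : star ψ ⬝ᵥ u₀ = ((G:ℝ):ℂ) := eq_re_of_nonneg (le_of_lt hGc0)
  have hG0 : 0 < G := (Complex.pos_iff.mp hGc0).1
  set H : ℝ := ∑ i, Complex.normSq (u₀ i) with hHdef
  have hHc : star u₀ ⬝ᵥ u₀ = ((H:ℝ):ℂ) := ip_self_eq u₀
  have hH0 : 0 < H := hsumpos u₀ hu₀0
  have hGH : G^2 ≤ H := by
    have h8 : G ≤ ‖star ψ ⬝ᵥ u₀‖ := Complex.re_le_norm _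
    have h9 := abs_ip_le ψ u₀
    rw [hψ, Real.sqrt_one, one_mul] at h9
    have h10 : G ≤ Real.sqrt H := le_trans h8 h9
    calc G^2 ≤ (Real.sqrt H)^2 := pow_le_pow_left₀ hG0.le h10 2
      _ = H := Real.sq_sqrt hH0.le
  have hσu₀ : σ *ᵥ u₀ = ψ - ((lam:ℝ):ℂ) • u₀ := by
    have h11 : σ = M - L := by rw [hMdef, add_sub_cancel_right]
    rw [h11, Matrix.sub_mulVec, hMu₀, hLmv]
  have hu₀ψ : star u₀ ⬝ᵥ ψ = ((G:ℝ):ℂ) := by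
    rw [ip_swap, hGc]; exact Complex.conj_ofReal G
  set D : ℝ := G - lam * H with hDdef
  have hDc : star u₀ ⬝ᵥ (σ *ᵥ u₀) = ((D:ℝ):ℂ) := by
    rw [hσu₀, dotProduct_sub, dotProduct_smul, smul_eq_mul, hu₀ψ, hHc, hDdef]
    push_cast; ring
  have hD0 : 0 < D := by
    have h12 : 0 ≤ D := by
      have h12a := (Complex.nonneg_iff.mp (hσpsd.dotProduct_mulVec_nonneg u₀)).1
      rw [hDc] at h12a
      exact_mod_cast h12a
    rcases eq_or_lt_of_le h12 with h13 | h13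
    · exfalso
      have h14 : star u₀ ⬝ᵥ (σ *ᵥ u₀) = 0 := by rw [hDc, ← h13]; norm_num
      have h15 : σ *ᵥ u₀ = 0 := (hσpsd.dotProduct_mulVec_zero_iff u₀).mp h14
      have h16 := hsupp u₀ h15
      rw [ketbra_mulVec] at h16
      rcases smul_eq_zero.mp h16 with h17 | h17
      · rw [hGc] at h17
        exact hG0.ne' (by exact_mod_cast h17)
      · exact hψ0 h17
    · exact h13
  set E : ℝ := lam * G with hEdef
  have hE0 : 0 < E := by rw [hEdef]; positivity
  -- the POVM element built from u₀
  set su : ℝ := (Real.sqrt H)⁻¹ with hsudef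
  have hsu0 : 0 < su := by positivity
  have hsu2 : su^2 = H⁻¹ := by
    rw [hsudef, ← Real.sqrt_inv, Real.sq_sqrt (by positivity)]
  set u : Fin n → ℂ := ((su:ℝ):ℂ) • u₀ with hudef
  have hnormSq_smul : ∀ (t : ℝ) (x : Fin n → ℂ) (i : Fin n),
      Complex.normSq ((((t:ℝ):ℂ) • x) i) = t^2 * Complex.normSq (x i) := by
    intro t x i
    simp [Pi.smul_apply, Complex.normSq_mul, Complex.normSq_ofReal, sq]
  have hu1 : ∑ i, Complex.normSq (u i) = 1 := by
    rw [hudef]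
    calc ∑ i, Complex.normSq ((((su:ℝ):ℂ) • u₀) i) = ∑ i, su^2 * Complex.normSq (u₀ i) := by
          apply Finset.sum_congr rfl; intro i _; exact hnormSq_smul su u₀ i
      _ = su^2 * H := by rw [← Finset.mul_sum, hHdef]
      _ = 1 := by rw [hsu2]; field_simp
  have hFpovm : IsPOVMElem (ketbra u) := ⟨ketbra_posSemidef u, one_sub_ketbra_posSemidef u hu1⟩
  set treal : ℝ := G^2 / H with htrealdef
  set sreal : ℝ := D / H with hsrealdef
  have htrRρ : trR (ketbra u) (ketbra ψ) = treal := by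
    unfold trR
    rw [trace_ketbra_mul, ketbra_form]
    have h18 : star ψ ⬝ᵥ u = ((su * G : ℝ) : ℂ) := by
      rw [hudef, dotProduct_smul, smul_eq_mul, hGc]; push_cast; ring
    rw [h18]
    simp only [Complex.ofReal_re, Complex.normSq_ofReal]
    rw [htrealdef, div_eq_mul_inv, ← hsu2]; ring
  have htrRσ : trR (ketbra u) σ = sreal := by
    unfold trR
    rw [trace_ketbra_mul]
    have h19 : star u ⬝ᵥ (σ *ᵥ u) = ((su^2 * D : ℝ) : ℂ) := by
      rw [hudef, star_smul, smul_dotProduct, Matrix.mulVec_smul, dotProduct_smul,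
        smul_eq_mul, smul_eq_mul, hDc, Complex.star_def, Complex.conj_ofReal]
      push_cast; ring
    rw [h19]
    simp only [Complex.ofReal_re]
    rw [hsrealdef, div_eq_mul_inv, ← hsu2]; ring
  have hsreal0 : 0 < sreal := by rw [hsrealdef]; positivity
  have hxFS : treal * Real.logb 2 (treal / sreal) ∈ S := by
    simp only [hSdef, Set.mem_setOf_eq]
    refine ⟨ketbra u, hFpovm, ?_, ?_⟩
    · rw [htrRσ]; exact hsreal0.ne'
    · rw [htrRρ, htrRσ]
  have hxFk : treal * Real.logb 2 (treal / sreal) ≤ k := hmemk _ hxFS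
  have hElam : lam * ((r-1)*T) = 1 := by
    rw [hlamdef]; field_simp
  have hEkey : E ≤ 1/r := by
    by_contra hcon
    push_neg at hcon
    set a : ℝ := lam * H / G with hadef
    have hEa : E ≤ a := by
      rw [hEdef, hadef, le_div_iff₀ hG0]
      calc lam * G * G = lam * G^2 := by ring
        _ ≤ lam * H := mul_le_mul_of_nonneg_left hGH hlam0.le
    have ha1 : a < 1 := by
      rw [hadef, div_lt_one hG0]
      rw [hDdef] at hD0; linarith
    have hkey := keyIneq r k E a T hr1 hk0 hTdef hcon hEa ha1
    have hEa_eq : E / a = treal := by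
      rw [hEdef, hadef, htrealdef]
      field_simp
    have hX_eq : E * ((r-1)*T) / (1-a) = treal / sreal := by
      have h1a : 1 - a = D / G := by
        rw [hadef, hDdef]; field_simp
      have hEG : E * ((r-1)*T) = G := by
        rw [hEdef, show lam * G * ((r-1)*T) = lam * ((r-1)*T) * G from by ring, hElam, one_mul]
      rw [h1a, hEG, htrealdef, hsrealdef]
      field_simp

    rw [hEa_eq, hX_eq] at hkey
    exact absurd hxFk (not_le.mpr hkey)
  have hEr : E < 1 := lt_of_le_of_lt hEkey ((div_lt_one hr0).mpr hr1)
  have h1E : 0 < 1 - E := by linarith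
  -- construction of φ
  set φ₀ : Fin n → ℂ := σ *ᵥ u₀ with hφ₀def
  have hφ₀eq : φ₀ = ψ - ((lam:ℝ):ℂ) • u₀ := hσu₀
  have hψφ₀ : star ψ ⬝ᵥ φ₀ = ((1 - E : ℝ) : ℂ) := by
    rw [hφ₀eq, dotProduct_sub, dotProduct_smul, smul_eq_mul, hψip, hGc, hEdef]
    push_cast; ring
  set W : ℝ := ∑ i, Complex.normSq (φ₀ i) with hWdef
  have hWc : star φ₀ ⬝ᵥ φ₀ = ((W:ℝ):ℂ) := ip_self_eq φ₀
  have hWval : W = 1 - 2*E + lam^2 * H := by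
    have h20 : star φ₀ ⬝ᵥ φ₀ = ((1 - 2*E + lam^2*H : ℝ) : ℂ) := by
      rw [hφ₀eq]
      simp only [star_sub, star_smul, sub_dotProduct, dotProduct_sub,
        smul_dotProduct, dotProduct_smul, smul_eq_mul, Complex.star_def, Complex.conj_ofReal,
        hψip, hGc, hu₀ψ, hHc, hEdef]
      push_cast; ring
    have h21 := hWc.symm.trans h20
    exact_mod_cast h21
  have hW1 : (1-E)^2 ≤ W := by
    have h22 : lam^2 * G^2 ≤ lam^2 * H := mul_le_mul_of_nonneg_left hGH (sq_nonneg lam)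
    have h23 : E^2 = lam^2 * G^2 := by rw [hEdef]; ring
    have h23b : (1-E)^2 = 1 - 2*E + E^2 := by ring
    linarith
  have hW2 : W ≤ 1 - E := by
    have h24 : lam * H ≤ G := by rw [hDdef] at hD0; linarith
    have h25 : lam * (lam * H) ≤ lam * G := mul_le_mul_of_nonneg_left h24 hlam0.le
    have h26 : lam^2 * H = lam * (lam * H) := by ring
    rw [hWval, hEdef]
    linarith
  have hW0 : 0 < W := lt_of_lt_of_le (by positivity) hW1
  set sW : ℝ := (Real.sqrt W)⁻¹ with hsWdef
  have hsW0 : 0 < sW := by positivity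
  have hsW2 : sW^2 = W⁻¹ := by
    rw [hsWdef, ← Real.sqrt_inv, Real.sq_sqrt (by positivity)]
  set φ : Fin n → ℂ := ((sW:ℝ):ℂ) • φ₀ with hφdef
  have hφ1 : ∑ i, Complex.normSq (φ i) = 1 := by
    rw [hφdef]
    calc ∑ i, Complex.normSq ((((sW:ℝ):ℂ) • φ₀) i) = ∑ i, sW^2 * Complex.normSq (φ₀ i) := by
          apply Finset.sum_congr rfl; intro i _; exact hnormSq_smul sW φ₀ i
      _ = sW^2 * W := by rw [← Finset.mul_sum, hWdef]
      _ = 1 := by rw [hsW2]; field_simp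
  refine ⟨φ, hφ1, ?_, ?_⟩
  · -- trace norm bound
    set g : ℝ := (1-E) * sW with hgdef
    have hg : star ψ ⬝ᵥ φ = ((g:ℝ):ℂ) := by
      rw [hφdef, dotProduct_smul, smul_eq_mul, hψφ₀, hgdef]
      push_cast; ring
    have hTN := traceNorm_ketbra_sub_le ψ φ hψ hφ1 g hg
    have hg2 : 1 - g^2 ≤ E := by
      have h27 : g^2 = (1-E)^2 * W⁻¹ := by rw [hgdef, mul_pow, hsW2]
      have h28 : (1-E)^2 * (1-E)⁻¹ ≤ (1-E)^2 * W⁻¹ := by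
        apply mul_le_mul_of_nonneg_left _ (sq_nonneg _)
        exact inv_anti₀ hW0 hW2
      have h29 : (1-E)^2 * (1-E)⁻¹ = 1 - E := by field_simp
      rw [h27]; rw [h29] at h28; linarith
    calc traceNorm (ketbra ψ - ketbra φ) ≤ 2 * Real.sqrt (1 - g^2) := hTN
      _ ≤ 2 * Real.sqrt (1/r) := by
          apply mul_le_mul_of_nonneg_left _ (by norm_num)
          exact Real.sqrt_le_sqrt (le_trans hg2 hEkey)
      _ = 2 / Real.sqrt r := by
          rw [one_div, Real.sqrt_inv, div_eq_mul_inv]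
  · -- positivity of σ - c' • |φ⟩⟨φ|
    have hSqH := hσpsd.posSemidef_sqrt.1
    have hSqip : ∀ x y : Fin n → ℂ,
        star (hσpsd.sqrt *ᵥ x) ⬝ᵥ (hσpsd.sqrt *ᵥ y) = star x ⬝ᵥ (σ *ᵥ y) := by
      intro x y
      rw [Matrix.star_mulVec, hSqH.eq, ← Matrix.dotProduct_mulVec, Matrix.mulVec_mulVec,
        hσpsd.sqrt_mul_self]
    have hφ₀ip : ∀ w : Fin n → ℂ,
        star φ₀ ⬝ᵥ w = star (hσpsd.sqrt *ᵥ u₀) ⬝ᵥ (hσpsd.sqrt *ᵥ w) := by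
      intro w
      rw [hφ₀def, show σ *ᵥ u₀ = hσpsd.sqrt *ᵥ (hσpsd.sqrt *ᵥ u₀) from by
        rw [Matrix.mulVec_mulVec, hσpsd.sqrt_mul_self]]
      rw [Matrix.star_mulVec, hSqH.eq, ← Matrix.dotProduct_mulVec]
    have hSqu₀ : ∑ i, Complex.normSq ((hσpsd.sqrt *ᵥ u₀) i) = D := by
      have h30 : ((∑ i, Complex.normSq ((hσpsd.sqrt *ᵥ u₀) i) : ℝ) : ℂ) = ((D:ℝ):ℂ) := by
        rw [← ip_self_eq, hSqip, hDc]
      exact_mod_cast h30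
    refine Matrix.PosSemidef.of_dotProduct_mulVec_nonneg ?_ ?_
    · show (σ - ((c':ℝ):ℂ) • ketbra φ)ᴴ = _
      rw [Matrix.conjTranspose_sub, Matrix.conjTranspose_smul, hσpsd.1.eq,
        (ketbra_isHermitian φ).eq, Complex.star_def, Complex.conj_ofReal]
    · intro v
      rw [Matrix.sub_mulVec, dotProduct_sub, Matrix.smul_mulVec, dotProduct_smul,
        ketbra_form, smul_eq_mul, eq_re_of_nonneg (hσpsd.dotProduct_mulVec_nonneg v)]
      rw [show ((((star v ⬝ᵥ σ *ᵥ v).re : ℝ)) : ℂ) - ((c':ℝ):ℂ) * ((Complex.normSq (star φ ⬝ᵥ v) : ℝ) : ℂ)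
          = (((star v ⬝ᵥ σ *ᵥ v).re - c' * Complex.normSq (star φ ⬝ᵥ v) : ℝ) : ℂ) from by push_cast; ring]
      rw [Complex.zero_le_real]
      set Qv : ℝ := (star v ⬝ᵥ σ *ᵥ v).re with hQvdef
      have hQv0 : 0 ≤ Qv := (Complex.nonneg_iff.mp (hσpsd.dotProduct_mulVec_nonneg v)).1
      have hSqv : ∑ i, Complex.normSq ((hσpsd.sqrt *ᵥ v) i) = Qv := by
        have h31 : ((∑ i, Complex.normSq ((hσpsd.sqrt *ᵥ v) i) : ℝ) : ℂ) = ((Qv:ℝ):ℂ) := by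
          rw [← ip_self_eq, hSqip, eq_re_of_nonneg (hσpsd.dotProduct_mulVec_nonneg v)]
        exact_mod_cast h31
      have hipb : Complex.normSq (star φ₀ ⬝ᵥ v) ≤ D * Qv := by
        rw [hφ₀ip]
        have h32 := normSq_ip_le (hσpsd.sqrt *ᵥ u₀) (hσpsd.sqrt *ᵥ v)
        rw [hSqu₀, hSqv] at h32
        exact h32
      have hz : Complex.normSq (star φ ⬝ᵥ v) ≤ D * Qv / W := by
        have hφv : star φ ⬝ᵥ v = ((sW:ℝ):ℂ) * (star φ₀ ⬝ᵥ v) := by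
          rw [hφdef, star_smul, smul_dotProduct, smul_eq_mul, Complex.star_def,
            Complex.conj_ofReal]
        rw [hφv, Complex.normSq_mul, Complex.normSq_ofReal]
        have h33 : sW * sW = W⁻¹ := by rw [← sq, hsW2]
        rw [h33, div_eq_inv_mul]
        exact mul_le_mul_of_nonneg_left hipb (inv_nonneg.mpr hW0.le)
      have hcDW : c' * D ≤ W := by
        have h34 : D ≤ G := by rw [hDdef]; linarith [mul_nonneg hlam0.le hH0.le]
        have h35 : c' * D ≤ c' * G := mul_le_mul_of_nonneg_left h34 hc'0
        have hc'eq : c' = lam * ((r-1)^2/r) := by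
          rw [hc'def, hlamdef]; field_simp
        have h36 : c' * G = E * ((r-1)^2/r) := by
          rw [hc'eq, hEdef]; ring
        have hEr' : E * r ≤ 1 := by
          rw [← le_div_iff₀ hr0]; exact hEkey
        have hu' : 0 ≤ 1 - E * r := by linarith
        have h37 : E * ((r-1)^2/r) ≤ (1-E)^2 := by
          rw [← mul_div_assoc, div_le_iff₀ hr0]
          exact coef_ineq r E hr1 hE0 hEr'

        calc c' * D ≤ c' * G := h35
          _ = E * ((r-1)^2/r) := h36
          _ ≤ (1-E)^2 := h37
          _ ≤ W := hW1
      have h38 : c' * (D * Qv / W) ≤ Qv := by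
        have h39 : c' * (D * Qv / W) = (c' * D) * (Qv / W) := by ring
        have h40 : (c' * D) * (Qv / W) ≤ W * (Qv / W) :=
          mul_le_mul_of_nonneg_right hcDW (by positivity)
        have h41 : W * (Qv / W) = Qv := by field_simp
        rw [h39]; rw [h41] at h40; exact h40
      have h42 : c' * Complex.normSq (star φ ⬝ᵥ v) ≤ c' * (D * Qv / W) :=
        mul_le_mul_of_nonneg_left hz hc'0
      linarith

end
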